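/- For every monic polynomial p(z) = z^n + a_{n-1} z^{n-1} + ... + a_1 z + a_0 with coefficients a_i in a unital complex Banach algebra A (n ≥ 1), there exists a complex number z such that p(z) is not invertible in A. -/

import Mathlib

open Filter Metric Topology

/-- For every monic polynomial `p(z) = z^n + a_{n-1} z^{n-1} + ⋯ + a_0` (n ≥ 1) with
coefficients in a unital complex Banach algebra `A`, there exists `z : ℂ` such that
`p(z)` is not invertible in `A`. -/
theorem stmt_0 {A : Type*} [NormedRing A] [NormedAlgebra ℂ A] [CompleteSpace A]
    [Nontrivial A] (n : ℕ) (hn : 1 ≤ n) (a : ℕ → A) :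
    ∃ z : ℂ, ¬ IsUnit ((z ^ n) • (1 : A) + ∑ i ∈ Finset.range n, (z ^ i) • a i) := by
  by_contra! h
  set s : ℂ → A := fun z => ∑ i ∈ Finset.range n, (z ^ i) • a i with hs
  set p : ℂ → A := fun z => (z ^ n) • (1 : A) + s z with hp
  have hu : ∀ z, IsUnit (p z) := h
  set f : ℂ → A := fun z => Ring.inverse (p z) with hf
  have hpdiff : Differentiable ℂ p := by
    apply Differentiable.add
    · exact (differentiable_pow n).smul_const 1
    · exact Differentiable.fun_sum fun i _ => (differentiable_pow i).smul_const (a i)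
  have hfdiff : Differentiable ℂ f := fun z =>
    (differentiableAt_inverse (hu z)).comp z (hpdiff z)
  have hmul : ∀ z, f z * p z = 1 := fun z => Ring.inverse_mul_cancel _ (hu z)
  set B : ℝ := ‖(1 : A)‖ with hB
  set C : ℝ := ∑ i ∈ Finset.range n, ‖a i‖ with hC
  have hCnn : 0 ≤ C := Finset.sum_nonneg fun i _ => norm_nonneg _
  have hsb : ∀ z : ℂ, 1 ≤ ‖z‖ → ‖s z‖ ≤ ‖z‖ ^ (n - 1) * C := by
    intro z hz
    calc ‖s z‖ ≤ ∑ i ∈ Finset.range n, ‖(z ^ i) • a i‖ := norm_sum_le _ _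
      _ ≤ ∑ i ∈ Finset.range n, ‖z‖ ^ (n - 1) * ‖a i‖ := by
          apply Finset.sum_le_sum
          intro i hi
          rw [norm_smul, norm_pow]
          gcongr
          · simp only [Finset.mem_range] at hi; omega
      _ = ‖z‖ ^ (n - 1) * C := by rw [hC, Finset.mul_sum]
  -- key bound: for large z, ‖f z‖ ≤ 2B / ‖z‖
  have hkey : ∀ z : ℂ, max 1 (2 * C) ≤ ‖z‖ → ‖f z‖ ≤ 2 * B / ‖z‖ := by
    intro z hz
    have hz1 : 1 ≤ ‖z‖ := le_trans (le_max_left _ _) hz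
    have hz0 : (0:ℝ) < ‖z‖ := lt_of_lt_of_le one_pos hz1
    have hzC : 2 * C ≤ ‖z‖ := le_trans (le_max_right _ _) hz
    have hzne : z ≠ 0 := by
      intro hz0'; rw [hz0', norm_zero] at hz1; linarith
    have hzn : (z : ℂ) ^ n ≠ 0 := pow_ne_zero n hzne
    have heq : (z ^ n) • f z = 1 - f z * s z := by
      have h1 := hmul z
      rw [hp] at h1
      simp only [mul_add] at h1
      rw [mul_smul_comm, mul_one] at h1
      exact eq_sub_of_add_eq (by rw [add_comm] at h1 ⊢; exact h1)
    have hnorm : ‖z‖ ^ n * ‖f z‖ = ‖(z ^ n) • f z‖ := by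
      rw [norm_smul, norm_pow]
    have hfb : ‖z‖ ^ n * ‖f z‖ ≤ B + ‖f z‖ * (‖z‖ ^ (n - 1) * C) := by
      rw [hnorm, heq]
      calc ‖1 - f z * s z‖ ≤ ‖(1 : A)‖ + ‖f z * s z‖ := norm_sub_le _ _
        _ ≤ B + ‖f z‖ * (‖z‖ ^ (n - 1) * C) := by
            gcongr
            exact le_trans (norm_mul_le _ _) (by gcongr; exact hsb z hz1)
    -- ‖z‖^n = ‖z‖^(n-1) * ‖z‖
    have hpow : ‖z‖ ^ n = ‖z‖ ^ (n - 1) * ‖z‖ := by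
      rw [← pow_succ]
      congr 1
      omega
    have hp1 : (1:ℝ) ≤ ‖z‖ ^ (n - 1) := one_le_pow₀ hz1
    have hBnn : (0:ℝ) ≤ B := norm_nonneg _
    have hfnn : (0:ℝ) ≤ ‖f z‖ := norm_nonneg _
    rw [hpow] at hfb
    rw [le_div_iff₀ hz0]
    nlinarith [mul_nonneg hfnn hz0.le, mul_nonneg (mul_nonneg hfnn hz0.le) (sub_nonneg.2 hp1)]
  -- f tends to 0 at infinity
  have htend : Tendsto f (Bornology.cobounded ℂ) (𝓝 0) := by
    apply squeeze_zero_norm' (a := fun z : ℂ => 2 * B / ‖z‖)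
    · filter_upwards [tendsto_norm_cobounded_atTop.eventually_ge_atTop (max 1 (2 * C))] with z hz
      exact hkey z hz
    · exact Tendsto.div_atTop tendsto_const_nhds tendsto_norm_cobounded_atTop
  have hzero : f 0 = 0 := by
    apply hfdiff.apply_eq_of_tendsto_cocompact 0
    rwa [← Metric.cobounded_eq_cocompact]
  have := hmul 0
  rw [hzero, zero_mul] at this
  exact zero_ne_one this
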